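/- Fix an integer n ≥ 1, set N = 2n + 3, and let V, F, and the Verlinde product be as defined. Then for all integers a, b with 0 ≤ b ≤ a ≤ n, the product in V is given explicitly by e_a · e_b = Σ_{i : 0 ≤ i ≤ b, a−b+2i ≤ n} e_{a−b+2i} − Σ_{i : 0 ≤ i ≤ b, a−b+2i > n} e_{2n+1+b−2i−a}. -/

import Mathlib

open BigOperators

/-- The folding map `F : ℕ → V` for type `A₂⁽²⁾` at level `2n`, where
`V = Fin (n+1) → ℤ` is the free ℤ-module with basis `e₀, …, e_n` and
`N = 2n + 3`:  `F m = e_{m'}` if `m ≡ m' (mod N)` with `0 ≤ m' ≤ n`;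
`F m = 0` if `m ≡ N - 1 (mod N)`; `F m = -e_{m'}` if `m + m' + 2 ≡ 0 (mod N)`
with `0 ≤ m' ≤ n`. -/
def foldA2 (n m : ℕ) : Fin (n + 1) → ℤ :=
  if h : m % (2 * n + 3) ≤ n then
    Pi.single (⟨m % (2 * n + 3), by omega⟩ : Fin (n + 1)) 1
  else if h2 : m % (2 * n + 3) = 2 * n + 2 then 0
  else - Pi.single (⟨2 * n + 1 - m % (2 * n + 3), by omega⟩ : Fin (n + 1)) 1

/-- The basis vector `e_m` of `V = Fin (n+1) → ℤ` (zero if `m > n`). -/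
def eN (n m : ℕ) : Fin (n + 1) → ℤ :=
  if h : m ≤ n then Pi.single (⟨m, by omega⟩ : Fin (n + 1)) 1 else 0

/-- The Verlinde product on `V = Fin (n+1) → ℤ`: the ℤ-bilinear product with
`e_a · e_b = ∑_{i=0}^{min a b} F (a + b - 2 i)`. -/
def vmul (n : ℕ) (x y : Fin (n + 1) → ℤ) : Fin (n + 1) → ℤ :=
  fun c => ∑ a : Fin (n + 1), ∑ b : Fin (n + 1),
    x a * y b * (∑ i ∈ Finset.range (min a.1 b.1 + 1), foldA2 n (a.1 + b.1 - 2 * i)) c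

/-- The structure constants `N_{ab}^c` of the Verlinde product, defined by
`e_a · e_b = ∑_c N_{ab}^c e_c`. -/
def Nconst (n a b c : ℕ) : ℤ :=
  if h : c ≤ n then vmul n (eN n a) (eN n b) ⟨c, by omega⟩ else 0

/-- Explicit formula for the Verlinde product of type `A₂⁽²⁾` at level `2n`:
for `0 ≤ b ≤ a ≤ n`,
`e_a · e_b = ∑_{i ≤ b, a-b+2i ≤ n} e_{a-b+2i} - ∑_{i ≤ b, a-b+2i > n} e_{2n+1+b-2i-a}`. -/
theorem vmul_explicit (n : ℕ) (hn : 1 ≤ n) (a b : ℕ) (hba : b ≤ a) (han : a ≤ n) :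
    vmul n (eN n a) (eN n b) =
      (∑ i ∈ (Finset.range (b + 1)).filter (fun i => a - b + 2 * i ≤ n),
        eN n (a - b + 2 * i))
      - ∑ i ∈ (Finset.range (b + 1)).filter (fun i => n < a - b + 2 * i),
        eN n (2 * n + 1 + b - 2 * i - a) := by
  have hbn : b ≤ n := hba.trans han
  funext c
  have key : vmul n (eN n a) (eN n b) c
      = ∑ i ∈ Finset.range (b + 1), foldA2 n (a + b - 2 * i) c := by
    simp only [vmul, eN, dif_pos han, dif_pos hbn, Pi.single_apply]
    simp only [ite_mul, one_mul, zero_mul, mul_ite, mul_one, mul_zero]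
    rw [Finset.sum_eq_single (⟨a, by omega⟩ : Fin (n+1))]
    · rw [Finset.sum_eq_single (⟨b, by omega⟩ : Fin (n+1))]
      · simp [min_eq_right hba]
      · intro b' _ hb'; simp [hb']
      · simp
    · intro a' _ ha'; simp [ha']
    · simp
  rw [key, ← Finset.sum_range_reflect]
  simp only [Pi.sub_apply, Finset.sum_apply]
  rw [Finset.sum_filter, Finset.sum_filter, ← Finset.sum_sub_distrib]
  refine Finset.sum_congr rfl ?_
  intro i hi
  rw [Finset.mem_range] at hi
  have harg : a + b - 2 * (b + 1 - 1 - i) = a - b + 2 * i := by omega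
  rw [harg]
  set m := a - b + 2 * i with hm
  have hmod : m % (2 * n + 3) = m := Nat.mod_eq_of_lt (by omega)
  by_cases hmn : m ≤ n
  · rw [if_pos hmn, if_neg (by omega), sub_zero]
    simp only [foldA2, eN, hmod, dif_pos hmn]
  · rw [if_neg hmn, if_pos (by omega), zero_sub]
    have hv : 2 * n + 1 - m = 2 * n + 1 + b - 2 * i - a := by omega
    simp only [foldA2, eN, hmod, dif_neg hmn, dif_neg (show ¬ m = 2 * n + 2 by omega),
      dif_pos (show 2 * n + 1 + b - 2 * i - a ≤ n by omega), hv, Pi.neg_apply]
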